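/- Twiddle operation (Lemma 2): Let X be a linear operator on V and define X̃ := (2πi)^{−1} ∮_Γ (H − z)^{−1} X (H − z)^{−1} dz. Then: (a) P X̃ P = 0 and Q X̃ Q = 0 where Q := 1 − P; (b) [H, X̃] = PX − XP; and (c) for any continuously differentiable family of orthogonal projections s ↦ P(s) with P(s₀) = P at the given point s₀, setting H^A_τ := H + (i/τ)[Ṗ(s₀), P], one has P [H^A_τ, X̃] Q = P X Q and Q [H^A_τ, X̃] P = − Q X P. -/

import Mathlib

open Metric Set Finset MeasureTheory
open scoped InnerProductSpace

lemma circleIntegral_finset_sum_smul_const {V : Type*} [NormedAddCommGroup V] [NormedSpace ℂ V]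
    [CompleteSpace V] {ι : Type*} (s : Finset ι) (g : ι → ℂ → ℂ) (A : ι → V)
    (c : ℂ) (r : ℝ) (hr : 0 < r)
    (hg : ∀ i ∈ s, ContinuousOn (g i) (sphere c r)) :
    (∮ z in C(c, r), ∑ i ∈ s, g i z • A i) = ∑ i ∈ s, (∮ z in C(c, r), g i z) • A i := by
  have hint : ∀ i ∈ s, IntervalIntegrable
      (fun θ : ℝ => deriv (circleMap c r) θ • (g i (circleMap c r θ) • A i))
      volume 0 (2 * Real.pi) :=
    fun i hi => (((hg i hi).smul continuousOn_const).circleIntegrable hr.le).out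
  calc (∮ z in C(c, r), ∑ i ∈ s, g i z • A i)
      = ∫ θ in (0)..(2*Real.pi), ∑ i ∈ s,
          deriv (circleMap c r) θ • (g i (circleMap c r θ) • A i) := by
        simp only [circleIntegral, Finset.smul_sum]
    _ = ∑ i ∈ s, ∫ θ in (0)..(2*Real.pi),
          deriv (circleMap c r) θ • (g i (circleMap c r θ) • A i) :=
        intervalIntegral.integral_finset_sum hint
    _ = ∑ i ∈ s, (∮ z in C(c, r), g i z • A i) := rfl
    _ = ∑ i ∈ s, (∮ z in C(c, r), g i z) • A i := by
        simp only [circleIntegral.integral_smul_const]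

lemma circleIntegral_sub_inv_of_outside {c w : ℂ} {r : ℝ} (hr : 0 < r) (hw : r < ‖w - c‖) :
    (∮ z in C(c, r), (z - w)⁻¹) = 0 := by
  have hne : ∀ z ∈ closedBall c r, z - w ≠ 0 := by
    intro z hz
    rw [sub_ne_zero]
    rintro rfl
    rw [mem_closedBall, dist_eq_norm] at hz
    exact absurd (hw.trans_le hz) (lt_irrefl _)
  refine Complex.circleIntegral_eq_zero_of_differentiable_on_off_countable hr.le
    Set.countable_empty (((continuousOn_id.sub continuousOn_const)).inv₀ hne) ?_
  intro z hz
  exact (differentiableAt_id.sub_const w).inv (hne z (ball_subset_closedBall hz.1))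

lemma circleIntegral_double_inv (c : ℂ) (r : ℝ) (hr : 0 < r) (a b : ℂ)
    (ha : ‖a - c‖ < r ∨ r < ‖a - c‖) (hb : ‖b - c‖ < r ∨ r < ‖b - c‖) :
    (∮ z in C(c, r), (z - a)⁻¹ * (z - b)⁻¹) =
      if ‖a - c‖ < r then
        (if ‖b - c‖ < r then 0 else (2 * Real.pi * Complex.I) * (a - b)⁻¹)
      else
        (if ‖b - c‖ < r then -((2 * Real.pi * Complex.I) * (a - b)⁻¹) else 0) := by
  have hzne : ∀ w : ℂ, ‖w - c‖ < r ∨ r < ‖w - c‖ → ∀ z ∈ sphere c r, z - w ≠ 0 := by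
    intro w hw z hz
    rw [mem_sphere_iff_norm] at hz
    rw [sub_ne_zero]
    rintro rfl
    rcases hw with h | h <;> rw [hz] at h <;> exact lt_irrefl _ h
  have hnotmem : ∀ w : ℂ, ‖w - c‖ < r ∨ r < ‖w - c‖ → w ∉ sphere c |r| := by
    intro w hw hmem
    rw [mem_sphere_iff_norm, abs_of_pos hr] at hmem
    rcases hw with h | h <;> rw [hmem] at h <;> exact lt_irrefl _ h
  rcases eq_or_ne a b with rfl | hab
  · have h0 : (∮ z in C(c, r), (z - a)⁻¹ * (z - a)⁻¹)
        = ∮ z in C(c, r), (z - a) ^ (-2 : ℤ) := by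
      refine circleIntegral.integral_congr hr.le fun z _ => ?_
      rw [zpow_neg, zpow_two, mul_inv]
    rw [h0, circleIntegral.integral_sub_zpow_of_ne (by decide) _ _ _]
    split_ifs <;> simp_all
  · have key : EqOn (fun z : ℂ => (z - a)⁻¹ * (z - b)⁻¹)
        (fun z : ℂ => (a - b)⁻¹ • ((z - a)⁻¹ - (z - b)⁻¹)) (sphere c r) := by
      intro z hz
      have h1 := hzne a ha z hz
      have h2 := hzne b hb z hz
      have h3 : a - b ≠ 0 := sub_ne_zero.2 hab
      simp only [smul_eq_mul]
      field_simp
      ring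
    have hia : CircleIntegrable (fun z : ℂ => (z - a)⁻¹) c r :=
      circleIntegrable_sub_inv_iff.2 (Or.inr (hnotmem a ha))
    have hib : CircleIntegrable (fun z : ℂ => (z - b)⁻¹) c r :=
      circleIntegrable_sub_inv_iff.2 (Or.inr (hnotmem b hb))
    rw [circleIntegral.integral_congr hr.le key, circleIntegral.integral_smul,
      circleIntegral.integral_sub hia hib]
    rcases ha with h | h <;> rcases hb with h' | h'
    · rw [circleIntegral.integral_sub_inv_of_mem_ball (mem_ball_iff_norm.2 h),
        circleIntegral.integral_sub_inv_of_mem_ball (mem_ball_iff_norm.2 h')]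
      rw [if_pos h, if_pos h']
      simp
    · rw [circleIntegral.integral_sub_inv_of_mem_ball (mem_ball_iff_norm.2 h),
        circleIntegral_sub_inv_of_outside hr h']
      rw [if_pos h, if_neg (not_lt.2 h'.le)]
      rw [smul_eq_mul]
      ring
    · rw [circleIntegral_sub_inv_of_outside hr h,
        circleIntegral.integral_sub_inv_of_mem_ball (mem_ball_iff_norm.2 h')]
      rw [if_neg (not_lt.2 h.le), if_pos h']
      rw [smul_eq_mul]
      ring
    · rw [circleIntegral_sub_inv_of_outside hr h, circleIntegral_sub_inv_of_outside hr h']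
      rw [if_neg (not_lt.2 h.le), if_neg (not_lt.2 h'.le)]
      simp

set_option maxHeartbeats 4000000 in
/-- **Twiddle operation (Lemma 2).**

`H` is a self-adjoint operator on a finite-dimensional complex inner product space,
`lam 1, …, lam m` are some of its eigenvalues, `P` the orthogonal projection onto the
sum of the corresponding eigenspaces, and `Γ` (a positively oriented circle of center
`c` and radius `r`) encloses exactly these eigenvalues and no other point of the
spectrum, so that `P = −(2πi)⁻¹ ∮_Γ (H−z)⁻¹ dz`.  For a linear operator `X` define
`X̃ := (2πi)⁻¹ ∮_Γ (H−z)⁻¹ X (H−z)⁻¹ dz`.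

Then (a) `P X̃ P = 0` and `Q X̃ Q = 0` with `Q := 1 − P`; (b) `[H, X̃] = PX − XP`; and
(c) for any continuously differentiable family of orthogonal projections `s ↦ Pfam s`
with `Pfam s₀ = P`, setting `H^A_τ := H + (i/τ)[Ṗ(s₀), P]`, one has
`P [H^A_τ, X̃] Q = P X Q` and `Q [H^A_τ, X̃] P = − Q X P`. -/
theorem twiddle_operation
    {V : Type*} [NormedAddCommGroup V] [InnerProductSpace ℂ V] [FiniteDimensional ℂ V]
    (H : V →L[ℂ] V) (hH : IsSelfAdjoint H)
    (m : ℕ) (lam : Fin m → ℝ)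
    (hlam : ∀ j, Module.End.HasEigenvalue (H : V →ₗ[ℂ] V) (lam j : ℂ))
    (P : V →L[ℂ] V)
    (hPsa : IsSelfAdjoint P) (hPidem : P ∘L P = P)
    (hPrange : ∀ v : V, P v = v ↔
      v ∈ ⨆ j : Fin m, Module.End.eigenspace (H : V →ₗ[ℂ] V) (lam j : ℂ))
    (c : ℂ) (r : ℝ) (hr : 0 < r)
    (hin : ∀ j, ‖(lam j : ℂ) - c‖ < r)
    (hout : ∀ μ ∈ spectrum ℂ H, (∀ j, μ ≠ (lam j : ℂ)) → r < ‖μ - c‖)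
    (hPint : P = (-(2 * (Real.pi : ℂ) * Complex.I)⁻¹) •
      circleIntegral (fun z => Ring.inverse (H - z • (1 : V →L[ℂ] V))) c r)
    (X : V →L[ℂ] V) :
    let Q : V →L[ℂ] V := 1 - P
    let Xt : V →L[ℂ] V := (2 * (Real.pi : ℂ) * Complex.I)⁻¹ •
      circleIntegral (fun z =>
        Ring.inverse (H - z • (1 : V →L[ℂ] V)) ∘L X ∘L
          Ring.inverse (H - z • (1 : V →L[ℂ] V))) c r
    (P ∘L Xt ∘L P = 0 ∧ Q ∘L Xt ∘L Q = 0) ∧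
    (H ∘L Xt - Xt ∘L H = P ∘L X - X ∘L P) ∧
    (∀ (Pfam Pfam' : ℝ → V →L[ℂ] V) (s₀ τ : ℝ), 0 < τ →
      (∀ s, IsSelfAdjoint (Pfam s)) → (∀ s, Pfam s ∘L Pfam s = Pfam s) →
      (∀ s, HasDerivAt Pfam (Pfam' s) s) → Continuous Pfam' →
      Pfam s₀ = P →
      let HA : V →L[ℂ] V :=
        H + (Complex.I / (τ : ℂ)) • (Pfam' s₀ ∘L P - P ∘L Pfam' s₀)
      P ∘L (HA ∘L Xt - Xt ∘L HA) ∘L Q = P ∘L X ∘L Q ∧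
      Q ∘L (HA ∘L Xt - Xt ∘L HA) ∘L P = -(Q ∘L X ∘L P)) := by
  intro Q Xt
  classical
  have hQdef : Q = 1 - P := rfl
  have hXtdef : Xt = (2 * (Real.pi : ℂ) * Complex.I)⁻¹ •
      circleIntegral (fun z =>
        Ring.inverse (H - z • (1 : V →L[ℂ] V)) ∘L X ∘L
          Ring.inverse (H - z • (1 : V →L[ℂ] V))) c r := rfl
  have hSym : (H : V →ₗ[ℂ] V).IsSymmetric := hH.isSymmetric
  have hnn : Module.finrank ℂ V = Module.finrank ℂ V := rfl
  set n := Module.finrank ℂ V with hn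
  let b : OrthonormalBasis (Fin n) ℂ V := hSym.eigenvectorBasis hnn
  let κ : Fin n → ℝ := hSym.eigenvalues hnn
  let E : Fin n → V →L[ℂ] V := fun i => (innerSL ℂ (b i)).smulRight (b i)
  have hEapp : ∀ i v, E i v = ⟪b i, v⟫_ℂ • b i := fun i v => rfl
  have hbHb : ∀ i, H (b i) = ((κ i : ℂ)) • b i := by
    intro i
    have := hSym.apply_eigenvectorBasis hnn i
    exact this
  have hortho : ∀ i j, ⟪b i, b j⟫_ℂ = if i = j then 1 else 0 :=
    orthonormal_iff_ite.mp b.orthonormal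
  -- multiplicative structure facts
  have hEE : ∀ i j, E i * E j = if i = j then E i else 0 := by
    intro i j
    ext v
    simp only [ContinuousLinearMap.mul_apply, hEapp, inner_smul_right, hortho,
      ContinuousLinearMap.zero_apply]
    split_ifs with h
    · subst h; simp [hEapp]
    · simp
  have hsum : (∑ i, E i) = 1 := by
    ext v
    simp only [ContinuousLinearMap.sum_apply, hEapp, ContinuousLinearMap.one_apply]
    exact b.sum_repr' v
  have hHE : ∀ i, H * E i = (κ i : ℂ) • E i := by
    intro i
    ext v
    rw [ContinuousLinearMap.mul_apply, ContinuousLinearMap.smul_apply, hEapp,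
      ContinuousLinearMap.map_smul, hbHb i, smul_comm]
  have hEH : ∀ i, E i * H = (κ i : ℂ) • E i := by
    intro i
    ext v
    simp only [ContinuousLinearMap.mul_apply, ContinuousLinearMap.smul_apply, hEapp]
    have h1 : ⟪b i, H v⟫_ℂ = ⟪H (b i), v⟫_ℂ := (hSym (b i) v).symm
    rw [h1, hbHb i, inner_smul_left, Complex.conj_ofReal, smul_smul, mul_comm, ← smul_smul]
  -- every eigenvalue is inside or outside the circle
  have hclass : ∀ i, ‖((κ i : ℂ)) - c‖ < r ∨ r < ‖((κ i : ℂ)) - c‖ := by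
    intro i
    by_cases hex : ∃ j, ((κ i : ℂ)) = (lam j : ℂ)
    · obtain ⟨j, hj⟩ := hex
      left; rw [hj]; exact hin j
    · right
      refine hout _ ?_ (fun j hc => hex ⟨j, hc⟩)
      rw [spectrum.mem_iff]
      intro hU
      have hbne : b i ≠ 0 := (hSym.hasEigenvector_eigenvectorBasis hnn i).2
      obtain ⟨u, hu⟩ := hU
      have h0 : ((algebraMap ℂ (V →L[ℂ] V)) ((κ i : ℂ)) - H) (b i) = 0 := by
        simp only [ContinuousLinearMap.sub_apply, Algebra.algebraMap_eq_smul_one,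
          ContinuousLinearMap.smul_apply, ContinuousLinearMap.one_apply, hbHb i, sub_self]
      have hmul : ((↑u⁻¹ : V →L[ℂ] V) * ((algebraMap ℂ (V →L[ℂ] V)) ((κ i : ℂ)) - H)) = 1 := by
        rw [← hu]; exact u.inv_mul
      have : b i = 0 := by
        calc b i = ((↑u⁻¹ : V →L[ℂ] V) * ((algebraMap ℂ (V →L[ℂ] V)) ((κ i : ℂ)) - H)) (b i) := by
              rw [hmul]; rfl
          _ = (↑u⁻¹ : V →L[ℂ] V) (((algebraMap ℂ (V →L[ℂ] V)) ((κ i : ℂ)) - H) (b i)) := rfl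
          _ = 0 := by rw [h0]; simp
      exact hbne this
  -- z on the circle is never an eigenvalue
  have hkz : ∀ z ∈ sphere c r, ∀ i, ((κ i : ℂ)) - z ≠ 0 := by
    intro z hz i h0
    rw [mem_sphere_iff_norm] at hz
    have : ((κ i : ℂ)) = z := sub_eq_zero.mp h0
    rcases hclass i with h | h <;> rw [this, hz] at h <;> exact lt_irrefl _ h
  -- the resolvent
  have hres : ∀ z ∈ sphere c r, Ring.inverse (H - z • (1 : V →L[ℂ] V))
      = ∑ i, (((κ i : ℂ)) - z)⁻¹ • E i := by
    intro z hz
    set R : V →L[ℂ] V := ∑ i, (((κ i : ℂ)) - z)⁻¹ • E i with hR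
    have hterm : ∀ i : Fin n, (H - z • (1 : V →L[ℂ] V)) * ((((κ i : ℂ)) - z)⁻¹ • E i) = E i := by
      intro i
      rw [mul_smul_comm, sub_mul, hHE i, smul_mul_assoc, one_mul, ← sub_smul, smul_smul,
        inv_mul_cancel₀ (hkz z hz i), one_smul]
    have hterm' : ∀ i : Fin n, ((((κ i : ℂ)) - z)⁻¹ • E i) * (H - z • (1 : V →L[ℂ] V)) = E i := by
      intro i
      rw [smul_mul_assoc, mul_sub, hEH i, mul_smul_comm, mul_one, ← sub_smul, smul_smul,
        inv_mul_cancel₀ (hkz z hz i), one_smul]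
    have h1 : (H - z • (1 : V →L[ℂ] V)) * R = 1 := by
      rw [hR, Finset.mul_sum]
      rw [Finset.sum_congr rfl fun i _ => hterm i]
      exact hsum
    have h2 : R * (H - z • (1 : V →L[ℂ] V)) = 1 := by
      rw [hR, Finset.sum_mul]
      rw [Finset.sum_congr rfl fun i _ => hterm' i]
      exact hsum
    exact Ring.inverse_unit ⟨H - z • (1 : V →L[ℂ] V), R, h1, h2⟩
  -- convenient abbreviations
  have hπ : (2 * (Real.pi : ℂ) * Complex.I) ≠ 0 := Complex.two_pi_I_ne_zero
  have hgcont : ∀ w : ℂ, (∀ z ∈ sphere c r, w - z ≠ 0) →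
      ContinuousOn (fun z => (w - z)⁻¹) (sphere c r) := fun w hw =>
    (continuous_const.sub continuous_id).continuousOn.inv₀ hw
  set χ : Fin n → ℂ := fun i => if ‖((κ i : ℂ)) - c‖ < r then 1 else 0 with hχ
  set coef : Fin n × Fin n → ℂ := fun p =>
    if ‖((κ p.1 : ℂ)) - c‖ < r then
      (if ‖((κ p.2 : ℂ)) - c‖ < r then 0 else (((κ p.1 : ℂ)) - ((κ p.2 : ℂ)))⁻¹)
    else
      (if ‖((κ p.2 : ℂ)) - c‖ < r then -((((κ p.1 : ℂ)) - ((κ p.2 : ℂ)))⁻¹) else 0) with hcoef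
  -- the contour integral of the resolvent
  have hval1 : ∀ i : Fin n, (∮ z in C(c, r), (((κ i : ℂ)) - z)⁻¹)
      = (if ‖((κ i : ℂ)) - c‖ < r then -(2 * (Real.pi : ℂ) * Complex.I) else 0) := by
    intro i
    have hEq : EqOn (fun z : ℂ => (((κ i : ℂ)) - z)⁻¹)
        (fun z : ℂ => (-1 : ℂ) • (z - ((κ i : ℂ)))⁻¹) (sphere c r) := by
      intro z hz
      simp only [smul_eq_mul, neg_one_mul, ← inv_neg, neg_sub]
    rw [circleIntegral.integral_congr hr.le hEq, circleIntegral.integral_smul]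
    rcases hclass i with h | h
    · rw [circleIntegral.integral_sub_inv_of_mem_ball (mem_ball_iff_norm.2 h), if_pos h]
      simp
    · rw [circleIntegral_sub_inv_of_outside hr h, if_neg (not_lt.2 h.le)]
      simp
  have hP3 : P = ∑ i, χ i • E i := by
    rw [hPint,
      circleIntegral.integral_congr hr.le (fun z hz => hres z hz),
      circleIntegral_finset_sum_smul_const univ _ E c r hr
        (fun i _ => hgcont _ (fun z hz => hkz z hz i)),
      Finset.smul_sum]
    refine Finset.sum_congr rfl fun i _ => ?_
    rw [smul_smul, hval1 i]
    simp only [hχ]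
    split_ifs with h
    · rw [neg_mul_neg, inv_mul_cancel₀ hπ]
    · rw [mul_zero]
  -- the double-resolvent integrand
  have hres2 : EqOn
      (fun z => Ring.inverse (H - z • (1 : V →L[ℂ] V)) ∘L X ∘L
          Ring.inverse (H - z • (1 : V →L[ℂ] V)))
      (fun z => ∑ p : Fin n × Fin n,
        ((((κ p.1 : ℂ)) - z)⁻¹ * (((κ p.2 : ℂ)) - z)⁻¹) • (E p.1 * (X * E p.2)))
      (sphere c r) := by
    intro z hz
    show Ring.inverse (H - z • (1 : V →L[ℂ] V)) *
        (X * Ring.inverse (H - z • (1 : V →L[ℂ] V))) = _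
    rw [hres z hz]
    simp only [Finset.mul_sum, Finset.sum_mul, Finset.smul_sum, smul_mul_assoc,
      mul_smul_comm, smul_smul, Fintype.sum_prod_type]
    rw [Finset.sum_comm]
    refine Finset.sum_congr rfl fun i _ => Finset.sum_congr rfl fun j _ => ?_
    rw [mul_comm]
  have hcont2 : ∀ p : Fin n × Fin n, p ∈ (univ : Finset (Fin n × Fin n)) →
      ContinuousOn (fun z => ((((κ p.1 : ℂ)) - z)⁻¹ * (((κ p.2 : ℂ)) - z)⁻¹)) (sphere c r) :=
    fun p _ => (hgcont _ (fun z hz => hkz z hz p.1)).mul (hgcont _ (fun z hz => hkz z hz p.2))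
  have hXt2 : Xt = ∑ p : Fin n × Fin n, (coef p) • (E p.1 * (X * E p.2)) := by
    rw [hXtdef, circleIntegral.integral_congr hr.le hres2,
      circleIntegral_finset_sum_smul_const univ _ _ c r hr hcont2, Finset.smul_sum]
    refine Finset.sum_congr rfl fun p _ => ?_
    rw [smul_smul]
    congr 1
    have hEq : EqOn (fun z : ℂ => ((((κ p.1 : ℂ)) - z)⁻¹ * (((κ p.2 : ℂ)) - z)⁻¹))
        (fun z : ℂ => (z - ((κ p.1 : ℂ)))⁻¹ * (z - ((κ p.2 : ℂ)))⁻¹) (sphere c r) := by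
      intro z hz
      show (((κ p.1 : ℂ)) - z)⁻¹ * (((κ p.2 : ℂ)) - z)⁻¹ = _
      rw [← neg_sub z ((κ p.1 : ℂ)), ← neg_sub z ((κ p.2 : ℂ)), inv_neg, inv_neg, neg_mul_neg]
    rw [circleIntegral.integral_congr hr.le hEq,
      circleIntegral_double_inv c r hr _ _ (hclass p.1) (hclass p.2)]
    simp only [hcoef]
    split_ifs with h1 h2 h3
    · rw [mul_zero]
    · rw [← mul_assoc, inv_mul_cancel₀ hπ, one_mul]
    · rw [mul_neg, ← mul_assoc, inv_mul_cancel₀ hπ, one_mul]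
    · rw [mul_zero]
  -- structure facts
  have hPE : ∀ i, P * E i = χ i • E i := by
    intro i
    rw [hP3, Finset.sum_mul, Finset.sum_congr rfl
      (fun j (_ : j ∈ Finset.univ) => by rw [smul_mul_assoc, hEE j i])]
    rw [Finset.sum_eq_single i]
    · rw [if_pos rfl]
    · intro j _ hji
      rw [if_neg hji, smul_zero]
    · intro h
      exact absurd (Finset.mem_univ i) h
  have hEP : ∀ i, E i * P = χ i • E i := by
    intro i
    rw [hP3, Finset.mul_sum, Finset.sum_congr rfl
      (fun j (_ : j ∈ Finset.univ) => by rw [mul_smul_comm, hEE i j])]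
    rw [Finset.sum_eq_single i]
    · rw [if_pos rfl]
    · intro j _ hji
      rw [if_neg (fun h => hji h.symm), smul_zero]
    · intro h
      exact absurd (Finset.mem_univ i) h
  have hPP : P * P = P := hPidem
  have hQE : ∀ i, Q * E i = (1 - χ i) • E i := by
    intro i
    rw [hQdef, sub_mul, one_mul, hPE, sub_smul, one_smul]
  have hEQ : ∀ i, E i * Q = (1 - χ i) • E i := by
    intro i
    rw [hQdef, mul_sub, mul_one, hEP, sub_smul, one_smul]
  -- generic sandwich expansion
  have hAXB : ∀ (A B : V →L[ℂ] V) (f g : Fin n → ℂ),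
      (∀ i, A * E i = f i • E i) → (∀ j, E j * B = g j • E j) →
      A * Xt * B = ∑ p : Fin n × Fin n,
        (coef p * (f p.1 * g p.2)) • (E p.1 * (X * E p.2)) := by
    intro A B f g hA hB
    rw [hXt2, Finset.mul_sum, Finset.sum_mul]
    refine Finset.sum_congr rfl fun p _ => ?_
    rw [mul_smul_comm, smul_mul_assoc]
    have key : A * (E p.1 * (X * E p.2)) * B = (f p.1 * g p.2) • (E p.1 * (X * E p.2)) := by
      calc A * (E p.1 * (X * E p.2)) * B
          = (A * E p.1) * (X * (E p.2 * B)) := by noncomm_ring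
        _ = (f p.1 • E p.1) * (X * (g p.2 • E p.2)) := by rw [hA, hB]
        _ = (f p.1 * g p.2) • (E p.1 * (X * E p.2)) := by
            simp only [smul_mul_assoc, mul_smul_comm, smul_smul]
            rw [mul_comm (g p.2) (f p.1)]
    rw [key, smul_smul]
  -- part (a)
  have ha1 : P * Xt * P = 0 := by
    rw [hAXB P P χ χ hPE hEP]
    refine Finset.sum_eq_zero fun p _ => ?_
    have hz : coef p * (χ p.1 * χ p.2) = 0 := by
      simp only [hcoef, hχ]
      split_ifs <;> ring
    rw [hz, zero_smul]
  have ha2 : Q * Xt * Q = 0 := by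
    rw [hAXB Q Q _ _ hQE hEQ]
    refine Finset.sum_eq_zero fun p _ => ?_
    have hz : coef p * ((1 - χ p.1) * (1 - χ p.2)) = 0 := by
      simp only [hcoef, hχ]
      split_ifs <;> ring
    rw [hz, zero_smul]
  -- part (b)
  have hκne : ∀ i j : Fin n, ‖((κ i : ℂ)) - c‖ < r → ¬(‖((κ j : ℂ)) - c‖ < r) →
      ((κ i : ℂ)) ≠ ((κ j : ℂ)) := by
    intro i j hi hj h0
    rw [h0] at hi
    exact hj hi
  have hb : H * Xt - Xt * H = P * X - X * P := by
    have h1 : H * Xt = ∑ p : Fin n × Fin n,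
        (coef p * (κ p.1 : ℂ)) • (E p.1 * (X * E p.2)) := by
      rw [hXt2, Finset.mul_sum]
      refine Finset.sum_congr rfl fun p _ => ?_
      rw [mul_smul_comm]
      have key : H * (E p.1 * (X * E p.2)) = (κ p.1 : ℂ) • (E p.1 * (X * E p.2)) := by
        calc H * (E p.1 * (X * E p.2)) = (H * E p.1) * (X * E p.2) := by noncomm_ring
          _ = _ := by rw [hHE, smul_mul_assoc]
      rw [key, smul_smul]
    have h2 : Xt * H = ∑ p : Fin n × Fin n,
        (coef p * (κ p.2 : ℂ)) • (E p.1 * (X * E p.2)) := by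
      rw [hXt2, Finset.sum_mul]
      refine Finset.sum_congr rfl fun p _ => ?_
      rw [smul_mul_assoc]
      have key : (E p.1 * (X * E p.2)) * H = (κ p.2 : ℂ) • (E p.1 * (X * E p.2)) := by
        calc (E p.1 * (X * E p.2)) * H = E p.1 * (X * (E p.2 * H)) := by noncomm_ring
          _ = _ := by rw [hEH, mul_smul_comm, mul_smul_comm]
      rw [key, smul_smul]
    have h3 : P * X = ∑ p : Fin n × Fin n, χ p.1 • (E p.1 * (X * E p.2)) := by
      calc P * X = P * (X * 1) := by rw [mul_one]
        _ = P * (X * ∑ j, E j) := by rw [hsum]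
        _ = ∑ j, ∑ i, χ i • (E i * (X * E j)) := by
            rw [Finset.mul_sum, Finset.mul_sum]
            refine Finset.sum_congr rfl fun j _ => ?_
            rw [← mul_assoc, hP3, Finset.sum_mul, Finset.sum_mul]
            refine Finset.sum_congr rfl fun i _ => ?_
            rw [smul_mul_assoc, smul_mul_assoc, mul_assoc]
        _ = ∑ p : Fin n × Fin n, χ p.1 • (E p.1 * (X * E p.2)) := by
            rw [Fintype.sum_prod_type]
            rw [Finset.sum_comm]
    have h4 : X * P = ∑ p : Fin n × Fin n, χ p.2 • (E p.1 * (X * E p.2)) := by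
      calc X * P = 1 * (X * P) := by rw [one_mul]
        _ = (∑ i, E i) * (X * P) := by rw [hsum]
        _ = ∑ i, ∑ j, χ j • (E i * (X * E j)) := by
            rw [Finset.sum_mul]
            refine Finset.sum_congr rfl fun i _ => ?_
            rw [hP3, Finset.mul_sum, Finset.mul_sum]
            simp only [mul_smul_comm]
        _ = ∑ p : Fin n × Fin n, χ p.2 • (E p.1 * (X * E p.2)) := by
            rw [Fintype.sum_prod_type]
    rw [h1, h2, h3, h4, ← Finset.sum_sub_distrib, ← Finset.sum_sub_distrib]
    refine Finset.sum_congr rfl fun p _ => ?_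
    rw [← sub_smul, ← sub_smul]
    congr 1
    by_cases h1' : ‖((κ p.1 : ℂ)) - c‖ < r <;> by_cases h2' : ‖((κ p.2 : ℂ)) - c‖ < r
    · simp only [hcoef, hχ, if_pos h1', if_pos h2']
      ring
    · simp only [hcoef, hχ, if_pos h1', if_neg h2']
      rw [← mul_sub, inv_mul_cancel₀ (sub_ne_zero.2 (hκne p.1 p.2 h1' h2')), sub_zero]
    · simp only [hcoef, hχ, if_neg h1', if_pos h2']
      rw [← mul_sub, neg_mul, inv_mul_cancel₀ (sub_ne_zero.2 ((hκne p.2 p.1 h2' h1').symm)),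
        zero_sub]
    · simp only [hcoef, hχ, if_neg h1', if_neg h2']
      ring
  refine ⟨⟨?_, ?_⟩, ?_, ?_⟩
  · show P * (Xt * P) = 0
    rw [← mul_assoc]
    exact ha1
  · show Q * (Xt * Q) = 0
    rw [← mul_assoc]
    exact ha2
  · exact hb
  · -- part (c)
    intro Pfam Pfam2 s₀ τ htau hsa hidem hderiv hcont hPfam
    intro HA
    have hHA : HA = H + (Complex.I / (τ : ℂ)) • (Pfam2 s₀ * P - P * Pfam2 s₀) := rfl
    set D := Pfam2 s₀ with hD
    set w : ℂ := Complex.I / (τ : ℂ) with hw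
    have hPQ0 : P * Q = 0 := by rw [hQdef, mul_sub, mul_one, hPP, sub_self]
    have hQP0 : Q * P = 0 := by rw [hQdef, sub_mul, one_mul, hPP, sub_self]
    have hPQ1 : P + Q = 1 := by rw [hQdef]; abel
    have hPAP : P * (D * P - P * D) * P = 0 := by
      have e1 : P * (D * P - P * D) * P = (P * D) * (P * P) - (P * P) * (D * P) := by
        noncomm_ring
      rw [e1, hPP]
      noncomm_ring
    have hQAQ : Q * (D * P - P * D) * Q = 0 := by
      have e1 : Q * (D * P - P * D) * Q = (Q * D) * (P * Q) - (Q * P) * (D * Q) := by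
        noncomm_ring
      rw [e1, hPQ0, hQP0, mul_zero, zero_mul, sub_self]
    have ins : ∀ S Y : V →L[ℂ] V, P * S * P = 0 → Q * Y * Q = 0 → P * (S * Y) * Q = 0 := by
      intro S Y hS hY
      have e1 : P * (S * Y) * Q = P * (S * (1 * Y)) * Q := by rw [one_mul]
      rw [e1, ← hPQ1]
      have e2 : P * (S * ((P + Q) * Y)) * Q
          = (P * S * P) * (Y * Q) + (P * S) * (Q * Y * Q) := by noncomm_ring
      rw [e2, hS, hY, zero_mul, mul_zero, add_zero]
    have ins' : ∀ S Y : V →L[ℂ] V, Q * S * Q = 0 → P * Y * P = 0 → Q * (S * Y) * P = 0 := by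
      intro S Y hS hY
      have e1 : Q * (S * Y) * P = Q * (S * (1 * Y)) * P := by rw [one_mul]
      rw [e1, ← hPQ1]
      have e2 : Q * (S * ((P + Q) * Y)) * P
          = (Q * S) * (P * Y * P) + (Q * S * Q) * (Y * P) := by noncomm_ring
      rw [e2, hS, hY, mul_zero, zero_mul, add_zero]
    have hsplit : HA * Xt - Xt * HA
        = (H * Xt - Xt * H) + w • ((D * P - P * D) * Xt - Xt * (D * P - P * D)) := by
      have e1 : HA * Xt = H * Xt + w • ((D * P - P * D) * Xt) := by
        rw [hHA, add_mul, smul_mul_assoc]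
      have e2 : Xt * HA = Xt * H + w • (Xt * (D * P - P * D)) := by
        rw [hHA, mul_add, mul_smul_comm]
      rw [e1, e2, smul_sub]
      abel
    have t2 : P * ((D * P - P * D) * Xt - Xt * (D * P - P * D)) * Q = 0 := by
      have e : P * ((D * P - P * D) * Xt - Xt * (D * P - P * D)) * Q
          = P * ((D * P - P * D) * Xt) * Q - P * (Xt * (D * P - P * D)) * Q := by noncomm_ring
      rw [e, ins _ _ hPAP ha2, ins _ _ ha1 hQAQ, sub_self]
    have t2' : Q * ((D * P - P * D) * Xt - Xt * (D * P - P * D)) * P = 0 := by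
      have e : Q * ((D * P - P * D) * Xt - Xt * (D * P - P * D)) * P
          = Q * ((D * P - P * D) * Xt) * P - Q * (Xt * (D * P - P * D)) * P := by noncomm_ring
      rw [e, ins' _ _ hQAQ ha1, ins' _ _ ha2 hPAP, sub_self]
    have t1 : P * (P * X - X * P) * Q = P * (X * Q) := by
      have e : P * (P * X - X * P) * Q = (P * P) * (X * Q) - (P * X) * (P * Q) := by
        noncomm_ring
      rw [e, hPP, hPQ0, mul_zero, sub_zero]
    have t1' : Q * (P * X - X * P) * P = -(Q * (X * P)) := by
      have e : Q * (P * X - X * P) * P = (Q * P) * (X * P) - (Q * X) * (P * P) := by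
        noncomm_ring
      rw [e, hPP, hQP0, zero_mul, zero_sub, mul_assoc]
    have expand : ∀ Y Z M N : V →L[ℂ] V,
        Y * (M + w • N) * Z = Y * M * Z + w • (Y * N * Z) := by
      intro Y Z M N
      rw [mul_add, mul_smul_comm, add_mul, smul_mul_assoc]
    constructor
    · show P * ((HA * Xt - Xt * HA) * Q) = P * (X * Q)
      rw [← mul_assoc, hsplit, hb, expand, t1, t2, smul_zero, add_zero]
    · show Q * ((HA * Xt - Xt * HA) * P) = -(Q * (X * P))
      rw [← mul_assoc, hsplit, hb, expand, t1', t2', smul_zero, add_zero]
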